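/- (Equation (3.11).) Let n, k be integers with 0 ≤ k ≤ n/2 and let I be the ideal of ℚ[x_1,...,x_n,t] described below. Then for every 1 ≤ i ≤ n, the polynomial x_i² − (n−k+i+1)·t·x_i − t·(Σ_{p=1}^{i−1} x_p) + (Σ_{p=1}^{i} (n−k+p))·t² belongs to I. -/

import Mathlib

open scoped BigOperators

/-- The variable `t` in `ℚ[x₁,…,xₙ,t] = MvPolynomial (Fin (n+1)) ℚ`
(variable `0` is `t`, variable `i` is `xᵢ` for `1 ≤ i ≤ n`). -/
noncomputable def tP (n : ℕ) : MvPolynomial (Fin (n + 1)) ℚ :=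
  MvPolynomial.X 0

/-- The variable `xᵢ` (for `1 ≤ i ≤ n`) of `ℚ[x₁,…,xₙ,t]`, with the
convention `x₀ = 0` (and `xᵢ = 0` out of range). -/
noncomputable def xP (n : ℕ) (i : ℕ) : MvPolynomial (Fin (n + 1)) ℚ :=
  if h : 1 ≤ i ∧ i ≤ n then MvPolynomial.X ⟨i, by omega⟩ else 0

/-- The ideal `I` of `ℚ[x₁,…,xₙ,t]` generated by
(i) `∑ᵢ xᵢ - (n(n+1)/2)·t`;
(ii) `(xᵢ + xᵢ₋₁ - (n-k+i)·t)·(xᵢ - xᵢ₋₁ - t)` for `1 ≤ i ≤ n`;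
(iii) `∏_{j=0}^{k} (x_{i_j} - (i_j - j)·t)` for all `1 ≤ i₀ < ⋯ < iₖ ≤ n`. -/
noncomputable def Iid (n k : ℕ) : Ideal (MvPolynomial (Fin (n + 1)) ℚ) :=
  Ideal.span
    ({(∑ i ∈ Finset.Icc 1 n, xP n i) -
        MvPolynomial.C (((n : ℚ) * ((n : ℚ) + 1)) / 2) * tP n} ∪
      {p | ∃ i, 1 ≤ i ∧ i ≤ n ∧
        p = (xP n i + xP n (i - 1) - MvPolynomial.C ((n : ℚ) - (k : ℚ) + (i : ℚ)) * tP n) *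
              (xP n i - xP n (i - 1) - tP n)} ∪
      {p | ∃ m : Fin (k + 1) → ℕ, StrictMono m ∧ 1 ≤ m 0 ∧ m (Fin.last k) ≤ n ∧
        p = ∏ j : Fin (k + 1),
              (xP n (m j) - MvPolynomial.C ((m j : ℚ) - ((j : ℕ) : ℚ)) * tP n)})


lemma gen2_mem (n k : ℕ) (i : ℕ) (h1 : 1 ≤ i) (h2 : i ≤ n) :
    (xP n i + xP n (i - 1) - MvPolynomial.C ((n : ℚ) - (k : ℚ) + (i : ℚ)) * tP n) *
      (xP n i - xP n (i - 1) - tP n) ∈ Iid n k :=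
  Ideal.subset_span (Or.inl (Or.inr ⟨i, h1, h2, rfl⟩))

lemma xP_zero (n : ℕ) : xP n 0 = 0 := by simp [xP]

lemma sq_relation_aux (n k : ℕ) : ∀ j, j + 1 ≤ n →
    (xP n (j+1)) ^ 2 - MvPolynomial.C ((n : ℚ) - (k : ℚ) + ((j+1 : ℕ) : ℚ) + 1) * tP n * xP n (j+1) -
        tP n * (∑ p ∈ Finset.Icc 1 j, xP n p) +
        MvPolynomial.C (∑ p ∈ Finset.Icc 1 (j+1), ((n : ℚ) - (k : ℚ) + (p : ℚ))) * (tP n) ^ 2 ∈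
      Iid n k := by
  intro j
  induction j with
  | zero =>
    intro hn
    have hg := gen2_mem n k 1 le_rfl hn
    have key : (xP n 1) ^ 2 - MvPolynomial.C ((n : ℚ) - (k : ℚ) + ((1 : ℕ) : ℚ) + 1) * tP n * xP n 1 -
        tP n * (∑ p ∈ (Finset.Icc 1 0 : Finset ℕ), xP n p) +
        MvPolynomial.C (∑ p ∈ (Finset.Icc 1 1 : Finset ℕ), ((n : ℚ) - (k : ℚ) + (p : ℚ))) * (tP n) ^ 2 =
        (xP n 1 + xP n 0 - MvPolynomial.C ((n : ℚ) - (k : ℚ) + ((1:ℕ) : ℚ)) * tP n) *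
          (xP n 1 - xP n 0 - tP n) := by
      simp only [xP_zero, Finset.Icc_self, Finset.sum_singleton,
        Finset.Icc_eq_empty (by omega : ¬(1:ℕ) ≤ 0), Finset.sum_empty, Nat.cast_one]
      simp only [map_add, map_sub, map_one]
      ring
    rw [key]
    exact hg
  | succ m ih =>
    intro hn
    have hE := ih (by omega)
    have hg := gen2_mem n k (m + 2) (by omega) hn
    have hsub : (m + 2) - 1 = m + 1 := rfl
    rw [hsub] at hg
    have hs1 : ∑ p ∈ Finset.Icc 1 (m+1), xP n p = (∑ p ∈ Finset.Icc 1 m, xP n p) + xP n (m+1) :=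
      Finset.sum_Icc_succ_top (by omega) _
    have hs2 : ∑ p ∈ Finset.Icc 1 (m+2), ((n : ℚ) - (k : ℚ) + (p : ℚ)) =
        (∑ p ∈ Finset.Icc 1 (m+1), ((n : ℚ) - (k : ℚ) + (p : ℚ))) + ((n : ℚ) - (k : ℚ) + ((m+2 : ℕ) : ℚ)) :=
      Finset.sum_Icc_succ_top (by omega) _
    have key : (xP n (m+2)) ^ 2 - MvPolynomial.C ((n : ℚ) - (k : ℚ) + ((m+2 : ℕ) : ℚ) + 1) * tP n * xP n (m+2) -
        tP n * (∑ p ∈ Finset.Icc 1 (m+1), xP n p) +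
        MvPolynomial.C (∑ p ∈ Finset.Icc 1 (m+2), ((n : ℚ) - (k : ℚ) + (p : ℚ))) * (tP n) ^ 2 =
        ((xP n (m+1)) ^ 2 - MvPolynomial.C ((n : ℚ) - (k : ℚ) + ((m+1 : ℕ) : ℚ) + 1) * tP n * xP n (m+1) -
          tP n * (∑ p ∈ Finset.Icc 1 m, xP n p) +
          MvPolynomial.C (∑ p ∈ Finset.Icc 1 (m+1), ((n : ℚ) - (k : ℚ) + (p : ℚ))) * (tP n) ^ 2) +
        (xP n (m+2) + xP n (m+1) - MvPolynomial.C ((n : ℚ) - (k : ℚ) + ((m+2 : ℕ) : ℚ)) * tP n) *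
          (xP n (m+2) - xP n (m+1) - tP n) := by
      rw [hs1, hs2]
      push_cast
      simp only [map_add, map_sub, map_one, map_natCast, map_ofNat]
      ring
    rw [key]
    exact add_mem hE hg

/-- Equation (3.11): `xᵢ² - (n-k+i+1)·t·xᵢ - t·∑_{p<i} x_p + (∑_{p≤i}(n-k+p))·t² ∈ I`. -/
theorem sq_relation_mem_Iid (n k : ℕ) (h : 2 * k ≤ n) :
    ∀ i, 1 ≤ i → i ≤ n →
      (xP n i) ^ 2 - MvPolynomial.C ((n : ℚ) - (k : ℚ) + (i : ℚ) + 1) * tP n * xP n i -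
          tP n * (∑ p ∈ Finset.Icc 1 (i - 1), xP n p) +
          MvPolynomial.C (∑ p ∈ Finset.Icc 1 i, ((n : ℚ) - (k : ℚ) + (p : ℚ))) * (tP n) ^ 2 ∈
        Iid n k := by
  intro i h1 h2
  obtain ⟨j, rfl⟩ : ∃ j, i = j + 1 := ⟨i - 1, by omega⟩
  simpa using sq_relation_aux n k j h2
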